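/- Consider the network ∅ ⇌ X, 2X ⇌ 3X with rate constants κ₀, κ₋₁, κ₂, κ₋₃ > 0, and set B = κ₂/κ₋₃, R = κ₋₁/κ₋₃, P = κ₀/κ₂. The stationary distribution π^V(x) = π^V(0) Π_{i=1}^x B[(i−1)(i−2)+P]/(i(i−1)(i−2)+Ri) of the V-scaled stochastic model is Poisson with parameter VB if and only if P = R, i.e., π^V(x) ∝ (VB)^x/x! for all x ∈ ℤ_{≥0} iff κ₀κ₋₃ = κ₂κ₋₁. -/

import Mathlib

/-- For the network `∅ ⇌ X, 2X ⇌ 3X`, the stationary distribution of the `V`-scaled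
stochastic model is Poisson with parameter `VB` (with `B = κ₂/κm3`) if and only if
`P = R`, i.e. `κ₀κm3 = κ₂κm1`. -/
theorem stmt_12 (κ₀ κm1 κ₂ κm3 : ℝ)
    (h₀ : 0 < κ₀) (h₁ : 0 < κm1) (h₂ : 0 < κ₂) (h₃ : 0 < κm3)
    (V : ℝ) (hV : 0 < V)
    (B : ℝ) (hB : B = κ₂ / κm3)
    (p q : ℕ → ℝ)
    (hp : ∀ i, p i = κ₀ * V + (κ₂ / V) * i * (i - 1))
    (hq : ∀ i, q i = κm1 * i + (κm3 / V ^ 2) * i * (i - 1) * (i - 2)) :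
    (∀ x : ℕ, ∏ i ∈ Finset.Icc 1 x, p (i - 1) / q i = (V * B) ^ x / (Nat.factorial x))
      ↔ κ₀ * κm3 = κ₂ * κm1 := by
  constructor
  · intro h
    have h1 := h 1
    simp [Finset.Icc_self, hp 0, hq 1, hB] at h1
    have h1' : κ₀ * V / κm1 = V * (κ₂ / κm3) := by
      convert h1 using 2 <;> norm_num
    field_simp at h1'
    nlinarith [hV.ne']
  · intro hcond x
    induction x with
    | zero => simp
    | succ n ih =>
      rw [Finset.prod_Icc_succ_top (Nat.le_add_left 1 n), ih]
      have hn1 : (n + 1 - 1 : ℕ) = n := rfl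
      have hqpos : 0 < q (n + 1) := by
        rw [hq]
        push_cast
        have h1 : (0:ℝ) ≤ ((n:ℝ)+1) * (n:ℝ) * ((n:ℝ)-1) := by
          rcases n with _ | m
          · norm_num
          · push_cast
            have hm : (0:ℝ) ≤ ((m:ℕ):ℝ) := Nat.cast_nonneg m
            have h2 : (0:ℝ) ≤ (((m:ℕ):ℝ)+2) * (((m:ℕ):ℝ)+1) * ((m:ℕ):ℝ) := by positivity
            nlinarith [h2]
        nlinarith [sq_nonneg V, pow_pos hV 2, div_pos h₃ (pow_pos hV 2)]
      have key : p (n + 1 - 1) / q (n + 1) = V * B / (n + 1) := by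
        rw [hn1, div_eq_div_iff hqpos.ne' (by positivity : ((n:ℕ):ℝ)+1 ≠ 0)]
        rw [hp, hq, hB]
        push_cast
        field_simp
        linear_combination V ^ 2 * hcond
      rw [key, Nat.factorial_succ]
      push_cast
      have hnfac : ((Nat.factorial n : ℝ)) ≠ 0 := by positivity
      field_simp
      ring
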